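/- Let K⁺, K⁻ : ℕ → ℕ → ℝ be nonnegative kernels and K̂ : ℕ → ℕ → ℝ a nonnegative symmetric majorant kernel with K̂(x,y) ≥ max{K⁺(x,y), K⁻(x,y)} for all x, y. Let μ⊕, μ⊖ : ℕ → ℝ be nonnegative finitely supported functions, and for y ≥ 1 set T₊(y) := Σ_{x≥1} K̂(x,y) μ⊕(x) and T₋(y) := Σ_{z≥1} K̂(y,z) μ⊖(z). Define r⁻(x,y,z) := K̂(x,y)·K⁻(y,z)/T₊(y), r⁺(x,y,z) := K̂(y,z)·K⁺(x,y)/T₋(y), K_D⁰ := min{r⁻, r⁺} and Δ_D⁺ := max{r⁺ − r⁻, 0}. Then for all x, y ≥ 1 with T₋(y) > 0, Σ_{z≥1} ( K_D⁰(x,y,z) + Δ_D⁺(x,y,z) ) μ⊖(z) = K⁺(x,y). That is, in the Double Coupling algorithm, a given pair consisting of a ⊕-particle of size x and a ⊙-particle of size y coagulates in the X⁺ system at the correct total rate K⁺(x,y). -/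

import Mathlib

lemma mul_finsum_mem_real {s : Set ℕ} (c : ℝ) (f : ℕ → ℝ) (hf : (Function.support f).Finite) :
    ∑ᶠ z ∈ s, c * f z = c * ∑ᶠ z ∈ s, f z := by
  rw [finsum_mem_def, finsum_mem_def]
  have h1 : (Function.support (s.indicator f)).Finite := by
    rw [Set.support_indicator]; exact hf.subset Set.inter_subset_right
  have h2 : s.indicator (fun z => c * f z) = fun z => c • s.indicator f z := by
    ext z; simp only [Set.indicator, smul_eq_mul]; split <;> simp
  rw [h2]
  rw [← smul_finsum' c h1, smul_eq_mul]

/-- In the Double Coupling algorithm, a given pair consisting of a ⊕-particle of size `x`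
and a ⊙-particle of size `y` coagulates in the `X⁺` system at the correct total rate
`K⁺(x,y)`: summing the simultaneous rate `K_D⁰ = min{r⁻, r⁺}` and the `X⁺`-only rate
`Δ_D⁺ = max{r⁺ − r⁻, 0}` against the ⊖-density gives exactly `K⁺(x,y)`. -/
theorem double_coupling_correct_plus_rate
    (Kp Km Khat : ℕ → ℕ → ℝ)
    (hKp : ∀ x y, 0 ≤ Kp x y) (hKm : ∀ x y, 0 ≤ Km x y)
    (hKhat : ∀ x y, 0 ≤ Khat x y)
    (hKhatSymm : ∀ x y, Khat x y = Khat y x)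
    (hMaj : ∀ x y, max (Kp x y) (Km x y) ≤ Khat x y)
    (μp μm : ℕ → ℝ) (hμp : ∀ x, 0 ≤ μp x) (hμm : ∀ x, 0 ≤ μm x)
    (hμpFin : (Function.support μp).Finite) (hμmFin : (Function.support μm).Finite) :
    let Tp : ℕ → ℝ := fun y => ∑ᶠ x ∈ {x : ℕ | 1 ≤ x}, Khat x y * μp x
    let Tm : ℕ → ℝ := fun y => ∑ᶠ z ∈ {z : ℕ | 1 ≤ z}, Khat y z * μm z
    let rm : ℕ → ℕ → ℕ → ℝ := fun x y z => Khat x y * Km y z / Tp y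
    let rp : ℕ → ℕ → ℕ → ℝ := fun x y z => Khat y z * Kp x y / Tm y
    let KD0 : ℕ → ℕ → ℕ → ℝ := fun x y z => min (rm x y z) (rp x y z)
    let ΔDp : ℕ → ℕ → ℕ → ℝ := fun x y z => max (rp x y z - rm x y z) 0
    ∀ x y : ℕ, 1 ≤ x → 1 ≤ y → 0 < Tm y →
      ∑ᶠ z ∈ {z : ℕ | 1 ≤ z}, (KD0 x y z + ΔDp x y z) * μm z = Kp x y := by
  intro Tp Tm rm rp KD0 ΔDp x y hx hy hTm
  have hsupp : (Function.support fun z => Khat y z * μm z).Finite :=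
    hμmFin.subset (by intro z hz; simp only [Function.mem_support] at *; intro h; apply hz; rw [h, mul_zero])
  have key : ∀ z, (KD0 x y z + ΔDp x y z) * μm z =
      (Kp x y / Tm y) * (Khat y z * μm z) := by
    intro z
    have : KD0 x y z + ΔDp x y z = rp x y z := by
      simp only [KD0, ΔDp]
      rcases le_total (rm x y z) (rp x y z) with h | h
      · rw [min_eq_left h, max_eq_left (by linarith)]; ring
      · rw [min_eq_right h, max_eq_right (by linarith)]; ring
    rw [this]
    simp only [rp]
    ring
  rw [finsum_mem_congr rfl (fun z _ => key z), mul_finsum_mem_real _ _ hsupp]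
  show Kp x y / Tm y * Tm y = Kp x y
  field_simp
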